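/- Let U, V, S, X, Y, Z, L be finite random variables such that V — (S,U,X) — Y forms a Markov chain, Ỹ = (L,Y), Z̃ = (S,X), and S̃ = (L,S). Then I(V; Ỹ | U) − I(V; Z̃ | U) ≤ H(L). -/

import Mathlib

open scoped BigOperators Classical
open Finset

noncomputable section

/-- A probability mass function on a finite alphabet. -/
def IsPMF {α : Type*} [Fintype α] (p : α → ℝ) : Prop :=
  (∀ a, 0 ≤ p a) ∧ ∑ a, p a = 1

/-- Shannon entropy (base 2) of a PMF on a finite alphabet. -/
def ent {α : Type*} [Fintype α] (p : α → ℝ) : ℝ :=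
  -∑ a, p a * Real.logb 2 (p a)

/-- Pushforward of a PMF along a map (distribution of a random variable). -/
def pf {Ω T : Type*} [Fintype Ω] (p : Ω → ℝ) (f : Ω → T) : T → ℝ :=
  fun t => ∑ ω, if f ω = t then p ω else 0

/-- Mutual information of a joint PMF on a product alphabet. -/
def mi2 {α β : Type*} [Fintype α] [Fintype β] (p : α × β → ℝ) : ℝ :=
  ent (fun a => ∑ b, p (a, b)) + ent (fun b => ∑ a, p (a, b)) - ent p

/-- Conditional entropy H(β | α) for a joint PMF on α × β. -/
def condEnt {α β : Type*} [Fintype α] [Fintype β] (p : α × β → ℝ) : ℝ :=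
  ent p - ent (fun a => ∑ b, p (a, b))

/-- Conditional mutual information I(β; γ | α) for a joint PMF on α × β × γ. -/
def cmi {α β γ : Type*} [Fintype α] [Fintype β] [Fintype γ] (p : α × β × γ → ℝ) : ℝ :=
  ent (fun ab : α × β => ∑ c, p (ab.1, ab.2, c))
    + ent (fun ac : α × γ => ∑ b, p (ac.1, b, ac.2))
    - ent p - ent (fun a => ∑ b, ∑ c, p (a, b, c))

/-- Total variation distance between two PMFs on a finite alphabet. -/
def tv {α : Type*} [Fintype α] (p q : α → ℝ) : ℝ :=
  (∑ a, |p a - q a|) / 2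

lemma key_ineq {x y z w : ℝ} (hx : 0 ≤ x) (hxy : x ≤ y) (hxz : x ≤ z) (hyw : y ≤ w) :
    (x - y * z / w) / Real.log 2
      ≤ x * (Real.logb 2 x + Real.logb 2 w - Real.logb 2 y - Real.logb 2 z) := by
  have hl2 : 0 < Real.log 2 := Real.log_pos one_lt_two
  rcases eq_or_lt_of_le hx with h0 | h0
  · subst h0
    have h1 : 0 ≤ y * z / w := div_nonneg (mul_nonneg hxy hxz) (hxy.trans hyw)
    rw [zero_mul]
    apply div_nonpos_of_nonpos_of_nonneg <;> linarith
  · have hy : 0 < y := lt_of_lt_of_le h0 hxy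
    have hz : 0 < z := lt_of_lt_of_le h0 hxz
    have hw : 0 < w := lt_of_lt_of_le hy hyw
    rw [div_le_iff₀ hl2]
    simp only [Real.logb]
    have hlog : Real.log (y * z / (x * w)) ≤ y * z / (x * w) - 1 :=
      Real.log_le_sub_one_of_pos (by positivity)
    rw [Real.log_div (by positivity) (by positivity), Real.log_mul hy.ne' hz.ne',
        Real.log_mul h0.ne' hw.ne'] at hlog
    have h1 : x * (Real.log x / Real.log 2 + Real.log w / Real.log 2
        - Real.log y / Real.log 2 - Real.log z / Real.log 2) * Real.log 2
        = x * (Real.log x + Real.log w - Real.log y - Real.log z) := by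
      field_simp
    rw [h1]
    have h2 := mul_le_mul_of_nonneg_left hlog (le_of_lt h0)
    have h3 : x * (y * z / (x * w) - 1) = y * z / w - x := by
      field_simp
    nlinarith [h2, h3]

section Aux
variable {Ω : Type*} [Fintype Ω] {p : Ω → ℝ}

lemma pf_nonneg (hp : ∀ ω, 0 ≤ p ω) {T : Type*} (f : Ω → T) (t : T) : 0 ≤ pf p f t :=
  Finset.sum_nonneg fun ω _ => by by_cases h : f ω = t <;> simp [h, hp ω]

lemma sum_pf {T : Type*} [Fintype T] (f : Ω → T) : ∑ t, pf p f t = ∑ ω, p ω := by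
  unfold pf; rw [Finset.sum_comm]
  exact Finset.sum_congr rfl fun ω _ => by simp

lemma pf_pmf (hp : IsPMF p) {T : Type*} [Fintype T] (f : Ω → T) : IsPMF (pf p f) :=
  ⟨pf_nonneg hp.1 f, by rw [sum_pf]; exact hp.2⟩

lemma ent_pf_comp {A B : Type*} [Fintype A] [Fintype B] (f : Ω → A) (e : A → B)
    (he : Function.Injective e) : ent (pf p (fun ω => e (f ω))) = ent (pf p f) := by
  have hq : ∀ a, pf p (fun ω => e (f ω)) (e a) = pf p f a := by
    intro a; unfold pf; refine Finset.sum_congr rfl fun ω _ => ?_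
    simp [he.eq_iff]
  have hz : ∀ b, b ∉ Finset.image e Finset.univ → pf p (fun ω => e (f ω)) b = 0 := by
    intro b hb; unfold pf
    refine Finset.sum_eq_zero fun ω _ => ?_
    have hne : e (f ω) ≠ b := by
      intro h
      exact hb (h ▸ Finset.mem_image_of_mem e (Finset.mem_univ (f ω)))
    simp [hne]
  unfold ent
  rw [← Finset.sum_subset (Finset.subset_univ (Finset.image e Finset.univ))]
  · rw [Finset.sum_image (fun a _ b _ h => he h)]
    simp [hq]
  · intro b _ hb; simp [hz b hb]

lemma ent_eq_ent {T T' : Type*} [Fintype T] [Fintype T'] (f : Ω → T) (g : Ω → T')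
    (e : T' → T) (e' : T → T') (he : ∀ t, e' (e t) = t) (hfg : ∀ ω, f ω = e (g ω)) :
    ent (pf p f) = ent (pf p g) := by
  have hf : f = fun ω => e (g ω) := funext hfg
  rw [hf]
  exact ent_pf_comp g e (Function.LeftInverse.injective (g := e') he)

lemma pf_marg_fst {A B : Type*} [Fintype A] [Fintype B] (f : Ω → A) (g : Ω → B) :
    (fun a => ∑ b, pf p (fun ω => (f ω, g ω)) (a, b)) = pf p f := by
  funext a; unfold pf; rw [Finset.sum_comm]
  refine Finset.sum_congr rfl fun ω _ => ?_
  by_cases h : f ω = a <;> simp [h, Prod.ext_iff, Finset.sum_ite_eq]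

lemma pf_marg3_12 {A B C : Type*} [Fintype A] [Fintype B] [Fintype C]
    (f : Ω → A) (g : Ω → B) (h : Ω → C) :
    (fun ab : A × B => ∑ c, pf p (fun ω => (f ω, g ω, h ω)) (ab.1, ab.2, c))
      = pf p (fun ω => (f ω, g ω)) := by
  funext ab; unfold pf; rw [Finset.sum_comm]
  refine Finset.sum_congr rfl fun ω _ => ?_
  by_cases h1 : f ω = ab.1 <;> by_cases h2 : g ω = ab.2 <;>
    simp [h1, h2, Prod.ext_iff, Finset.sum_ite_eq]

lemma pf_marg3_13 {A B C : Type*} [Fintype A] [Fintype B] [Fintype C]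
    (f : Ω → A) (g : Ω → B) (h : Ω → C) :
    (fun ac : A × C => ∑ b, pf p (fun ω => (f ω, g ω, h ω)) (ac.1, b, ac.2))
      = pf p (fun ω => (f ω, h ω)) := by
  funext ac; unfold pf; rw [Finset.sum_comm]
  refine Finset.sum_congr rfl fun ω _ => ?_
  by_cases h1 : f ω = ac.1 <;> by_cases h2 : h ω = ac.2 <;>
    simp [h1, h2, Prod.ext_iff, Finset.sum_ite_eq]

lemma pf_marg3_1 {A B C : Type*} [Fintype A] [Fintype B] [Fintype C]
    (f : Ω → A) (g : Ω → B) (h : Ω → C) :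
    (fun a => ∑ b, ∑ c, pf p (fun ω => (f ω, g ω, h ω)) (a, b, c)) = pf p f := by
  funext a
  calc ∑ b, ∑ c, pf p (fun ω => (f ω, g ω, h ω)) (a, b, c)
      = ∑ b, pf p (fun ω => (f ω, g ω)) (a, b) := by
        refine Finset.sum_congr rfl fun b _ => ?_
        exact congrFun (pf_marg3_12 (p := p) f g h) (a, b)
    _ = pf p f a := congrFun (pf_marg_fst f g) a

lemma ent_submod {A B C : Type*} [Fintype A] [Fintype B] [Fintype C]
    (q : C × A × B → ℝ) (hq : IsPMF q) :
    ent q + ent (fun c => ∑ a, ∑ b, q (c, a, b))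
      ≤ ent (fun ca : C × A => ∑ b, q (ca.1, ca.2, b))
        + ent (fun cb : C × B => ∑ a, q (cb.1, a, cb.2)) := by
  obtain ⟨q0, qsum⟩ := hq
  set qCA : C × A → ℝ := fun ca => ∑ b, q (ca.1, ca.2, b) with hqCA
  set qCB : C × B → ℝ := fun cb => ∑ a, q (cb.1, a, cb.2) with hqCB
  set qC : C → ℝ := fun c => ∑ a, ∑ b, q (c, a, b) with hqC
  have qsum' : ∑ c, ∑ a, ∑ b, q (c, a, b) = 1 := by
    rw [← qsum]; simp [Fintype.sum_prod_type]
  have qCA0 : ∀ t, 0 ≤ qCA t := fun t => Finset.sum_nonneg fun b _ => q0 _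
  have qCB0 : ∀ t, 0 ≤ qCB t := fun t => Finset.sum_nonneg fun a _ => q0 _
  have hle1 : ∀ c a b, q (c, a, b) ≤ qCA (c, a) := fun c a b =>
    Finset.single_le_sum (fun b _ => q0 (c, a, b)) (Finset.mem_univ b)
  have hle2 : ∀ c a b, q (c, a, b) ≤ qCB (c, b) := fun c a b =>
    Finset.single_le_sum (fun a _ => q0 (c, a, b)) (Finset.mem_univ a)
  have hmargA : ∀ c, ∑ a, qCA (c, a) = qC c := fun c => rfl
  have hmargB : ∀ c, ∑ b, qCB (c, b) = qC c := fun c => Finset.sum_comm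
  have hle3 : ∀ c a, qCA (c, a) ≤ qC c := fun c a => by
    rw [← hmargA c]
    exact Finset.single_le_sum (fun a _ => qCA0 (c, a)) (Finset.mem_univ a)
  -- entropy expansions
  have Eq : ent q = -∑ c, ∑ a, ∑ b, q (c, a, b) * Real.logb 2 (q (c, a, b)) := by
    unfold ent; simp [Fintype.sum_prod_type]
  have EqCA : ent qCA = -∑ c, ∑ a, ∑ b, q (c, a, b) * Real.logb 2 (qCA (c, a)) := by
    unfold ent; simp only [Fintype.sum_prod_type, ← Finset.sum_mul]; rfl
  have EqCB : ent qCB = -∑ c, ∑ a, ∑ b, q (c, a, b) * Real.logb 2 (qCB (c, b)) := by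
    unfold ent; simp only [Fintype.sum_prod_type]
    congr 1
    refine Finset.sum_congr rfl fun c _ => ?_
    rw [Finset.sum_comm]
    refine Finset.sum_congr rfl fun b _ => ?_
    rw [← Finset.sum_mul]
  have EqC : ent qC = -∑ c, ∑ a, ∑ b, q (c, a, b) * Real.logb 2 (qC c) := by
    unfold ent; simp only [← Finset.sum_mul]; rfl
  -- the residual term
  have hr : ∑ c, (∑ a, ∑ b, qCA (c, a) * qCB (c, b)) / qC c = 1 := by
    rw [← qsum']
    refine Finset.sum_congr rfl fun c _ => ?_
    rw [← Finset.sum_mul_sum, hmargA, hmargB]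
    rcases eq_or_ne (qC c) 0 with h | h
    · simp [h]
    · field_simp
  have main : 0 ≤ ∑ c, ∑ a, ∑ b,
      (q (c, a, b) * Real.logb 2 (q (c, a, b)) + q (c, a, b) * Real.logb 2 (qC c)
        - q (c, a, b) * Real.logb 2 (qCA (c, a)) - q (c, a, b) * Real.logb 2 (qCB (c, b))) := by
    have hpt : ∀ c a b, (q (c, a, b) - qCA (c, a) * qCB (c, b) / qC c) / Real.log 2
        ≤ q (c, a, b) * Real.logb 2 (q (c, a, b)) + q (c, a, b) * Real.logb 2 (qC c)
          - q (c, a, b) * Real.logb 2 (qCA (c, a)) - q (c, a, b) * Real.logb 2 (qCB (c, b)) := by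
      intro c a b
      have h := key_ineq (q0 (c, a, b)) (hle1 c a b) (hle2 c a b) (hle3 c a)
      nlinarith [h]
    have hsum : ∑ c, ∑ a, ∑ b,
        (q (c, a, b) - qCA (c, a) * qCB (c, b) / qC c) / Real.log 2 = 0 := by
      simp only [sub_div, Finset.sum_sub_distrib, ← Finset.sum_div]
      rw [qsum', hr]
      simp
    calc (0 : ℝ) = ∑ c, ∑ a, ∑ b,
          (q (c, a, b) - qCA (c, a) * qCB (c, b) / qC c) / Real.log 2 := hsum.symm
      _ ≤ _ := Finset.sum_le_sum fun c _ => Finset.sum_le_sum fun a _ =>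
          Finset.sum_le_sum fun b _ => hpt c a b
  rw [Eq, EqCA, EqCB, EqC]
  have split : ∑ c, ∑ a, ∑ b,
      (q (c, a, b) * Real.logb 2 (q (c, a, b)) + q (c, a, b) * Real.logb 2 (qC c)
        - q (c, a, b) * Real.logb 2 (qCA (c, a)) - q (c, a, b) * Real.logb 2 (qCB (c, b)))
      = (∑ c, ∑ a, ∑ b, q (c, a, b) * Real.logb 2 (q (c, a, b)))
        + (∑ c, ∑ a, ∑ b, q (c, a, b) * Real.logb 2 (qC c))
        - (∑ c, ∑ a, ∑ b, q (c, a, b) * Real.logb 2 (qCA (c, a)))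
        - (∑ c, ∑ a, ∑ b, q (c, a, b) * Real.logb 2 (qCB (c, b))) := by
    simp [Finset.sum_sub_distrib, Finset.sum_add_distrib]
  linarith [main, split]

lemma cmi_eq {A B C : Type*} [Fintype A] [Fintype B] [Fintype C]
    (f : Ω → A) (g : Ω → B) (h : Ω → C) :
    cmi (pf p (fun ω => (f ω, g ω, h ω)))
      = ent (pf p (fun ω => (f ω, g ω))) + ent (pf p (fun ω => (f ω, h ω)))
        - ent (pf p (fun ω => (f ω, g ω, h ω))) - ent (pf p f) := by
  unfold cmi
  rw [pf_marg3_12, pf_marg3_13, pf_marg3_1]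

lemma ent_submod_pf (hp : IsPMF p) {A B C : Type*} [Fintype A] [Fintype B] [Fintype C]
    (f : Ω → A) (g : Ω → B) (h : Ω → C) :
    ent (pf p (fun ω => (h ω, f ω, g ω))) + ent (pf p h)
      ≤ ent (pf p (fun ω => (h ω, f ω))) + ent (pf p (fun ω => (h ω, g ω))) := by
  have H := ent_submod (pf p (fun ω => (h ω, f ω, g ω))) (pf_pmf hp _)
  rwa [pf_marg3_12, pf_marg3_13, pf_marg3_1] at H

lemma ent_pf_unit (hp : IsPMF p) : ent (pf p (fun _ => ())) = 0 := by
  have h : pf p (fun _ : Ω => ()) = fun _ => 1 := by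
    funext t; unfold pf
    simp [eq_iff_true_of_subsingleton, hp.2]
  rw [h]; unfold ent; simp

lemma ent_pair_le (hp : IsPMF p) {A B : Type*} [Fintype A] [Fintype B]
    (f : Ω → A) (g : Ω → B) :
    ent (pf p (fun ω => (f ω, g ω))) ≤ ent (pf p f) + ent (pf p g) := by
  have H := ent_submod_pf hp f g (fun _ => ())
  rw [ent_eq_ent (fun ω => ((), f ω, g ω)) (fun ω => (f ω, g ω))
      (fun t => ((), t.1, t.2)) (fun t => t.2) (fun t => rfl) (fun ω => rfl)] at H
  rw [ent_eq_ent (fun ω => ((), f ω)) f (fun a => ((), a)) (fun t => t.2)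
      (fun t => rfl) (fun ω => rfl)] at H
  rw [ent_eq_ent (fun ω => ((), g ω)) g (fun a => ((), a)) (fun t => t.2)
      (fun t => rfl) (fun ω => rfl)] at H
  rw [ent_pf_unit hp] at H
  linarith

lemma ent_le_pair (hp : IsPMF p) {A B : Type*} [Fintype A] [Fintype B]
    (f : Ω → A) (g : Ω → B) :
    ent (pf p f) ≤ ent (pf p (fun ω => (f ω, g ω))) := by
  have H := ent_submod_pf hp g g f
  rw [ent_eq_ent (fun ω => (f ω, g ω, g ω)) (fun ω => (f ω, g ω))
      (fun t => (t.1, t.2, t.2)) (fun t => (t.1, t.2.1)) (fun t => rfl) (fun ω => rfl)] at H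
  linarith
end Aux


/-- if `V — (S,U,X) — Y` is a Markov chain, then with `Ỹ = (L,Y)` and
`Z̃ = (S,X)` one has `I(V;Ỹ|U) − I(V;Z̃|U) ≤ H(L)`. -/
theorem stmt_8 {L S U V X Y : Type*}
    [Fintype L] [Fintype S] [Fintype U] [Fintype V] [Fintype X] [Fintype Y]
    (p : L × S × U × V × X × Y → ℝ) (hp : IsPMF p)
    (hMarkov : cmi (pf p (fun ω =>
        (((ω.2.1, ω.2.2.1, ω.2.2.2.2.1) : S × U × X), ω.2.2.2.1, ω.2.2.2.2.2))) = 0) :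
    cmi (pf p (fun ω => (ω.2.2.1, ω.2.2.2.1, ((ω.1, ω.2.2.2.2.2) : L × Y))))
      - cmi (pf p (fun ω => (ω.2.2.1, ω.2.2.2.1, ((ω.2.1, ω.2.2.2.2.1) : S × X))))
    ≤ ent (pf p (fun ω => ω.1)) := by
  rw [cmi_eq (p := p) (fun ω => ω.2.2.1) (fun ω => ω.2.2.2.1) (fun ω => (ω.1, ω.2.2.2.2.2)),
      cmi_eq (p := p) (fun ω => ω.2.2.1) (fun ω => ω.2.2.2.1) (fun ω => (ω.2.1, ω.2.2.2.2.1))]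
  rw [cmi_eq (p := p) (fun ω => (ω.2.1, ω.2.2.1, ω.2.2.2.2.1)) (fun ω => ω.2.2.2.1)
      (fun ω => ω.2.2.2.2.2)] at hMarkov
  -- relabelings of Markov-chain entropies to canonical flat form
  have M1 : ent (pf p fun ω => ((ω.2.1, ω.2.2.1, ω.2.2.2.2.1), ω.2.2.2.1))
      = ent (pf p fun ω => (ω.2.2.1, ω.2.2.2.1, ω.2.1, ω.2.2.2.2.1)) :=
    ent_eq_ent _ _ (fun t => ((t.2.2.1, t.1, t.2.2.2), t.2.1))
      (fun q => (q.1.2.1, q.2, q.1.1, q.1.2.2)) (fun t => rfl) (fun ω => rfl)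
  have M2 : ent (pf p fun ω => ((ω.2.1, ω.2.2.1, ω.2.2.2.2.1), ω.2.2.2.2.2))
      = ent (pf p fun ω => (ω.2.2.1, ω.2.1, ω.2.2.2.2.1, ω.2.2.2.2.2)) :=
    ent_eq_ent _ _ (fun t => ((t.2.1, t.1, t.2.2.1), t.2.2.2))
      (fun q => (q.1.2.1, q.1.1, q.1.2.2, q.2)) (fun t => rfl) (fun ω => rfl)
  have M3 : ent (pf p fun ω => ((ω.2.1, ω.2.2.1, ω.2.2.2.2.1), ω.2.2.2.1, ω.2.2.2.2.2))
      = ent (pf p fun ω => (ω.2.2.1, ω.2.2.2.1, ω.2.1, ω.2.2.2.2.1, ω.2.2.2.2.2)) :=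
    ent_eq_ent _ _ (fun t => ((t.2.2.1, t.1, t.2.2.2.1), t.2.1, t.2.2.2.2))
      (fun q => (q.1.2.1, q.2.1, q.1.1, q.1.2.2, q.2.2)) (fun t => rfl) (fun ω => rfl)
  have M4 : ent (pf p fun ω => (ω.2.1, ω.2.2.1, ω.2.2.2.2.1))
      = ent (pf p fun ω => (ω.2.2.1, ω.2.1, ω.2.2.2.2.1)) :=
    ent_eq_ent _ _ (fun t => (t.2.1, t.1, t.2.2))
      (fun q => (q.2.1, q.1, q.2.2)) (fun t => rfl) (fun ω => rfl)
  -- submodularity: I(V; SX | U,L,Y) ≥ 0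
  have F1 : ent (pf p fun ω => ((ω.2.2.1, ω.1, ω.2.2.2.2.2), ω.2.2.2.1, (ω.2.1, ω.2.2.2.2.1)))
        + ent (pf p fun ω => (ω.2.2.1, ω.1, ω.2.2.2.2.2))
      ≤ ent (pf p fun ω => ((ω.2.2.1, ω.1, ω.2.2.2.2.2), ω.2.2.2.1))
        + ent (pf p fun ω => ((ω.2.2.1, ω.1, ω.2.2.2.2.2), (ω.2.1, ω.2.2.2.2.1))) :=
    ent_submod_pf hp _ _ _
  have R1 : ent (pf p fun ω => ((ω.2.2.1, ω.1, ω.2.2.2.2.2), ω.2.2.2.1, (ω.2.1, ω.2.2.2.2.1)))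
      = ent (pf p fun ω => (ω.2.2.1, ω.2.2.2.1, ω.2.1, ω.2.2.2.2.1, ω.1, ω.2.2.2.2.2)) :=
    ent_eq_ent _ _ (fun t => ((t.1, t.2.2.2.2.1, t.2.2.2.2.2), t.2.1, (t.2.2.1, t.2.2.2.1)))
      (fun q => (q.1.1, q.2.1, q.2.2.1, q.2.2.2, q.1.2.1, q.1.2.2)) (fun t => rfl) (fun ω => rfl)
  have R2 : ent (pf p fun ω => ((ω.2.2.1, ω.1, ω.2.2.2.2.2), ω.2.2.2.1))
      = ent (pf p fun ω => (ω.2.2.1, ω.2.2.2.1, ω.1, ω.2.2.2.2.2)) :=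
    ent_eq_ent _ _ (fun t => ((t.1, t.2.2.1, t.2.2.2), t.2.1))
      (fun q => (q.1.1, q.2, q.1.2.1, q.1.2.2)) (fun t => rfl) (fun ω => rfl)
  have R3 : ent (pf p fun ω => ((ω.2.2.1, ω.1, ω.2.2.2.2.2), (ω.2.1, ω.2.2.2.2.1)))
      = ent (pf p fun ω => (ω.2.2.1, ω.2.1, ω.2.2.2.2.1, ω.1, ω.2.2.2.2.2)) :=
    ent_eq_ent _ _ (fun t => ((t.1, t.2.2.2.1, t.2.2.2.2), (t.2.1, t.2.2.1)))
      (fun q => (q.1.1, q.2.1, q.2.2, q.1.2.1, q.1.2.2)) (fun t => rfl) (fun ω => rfl)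
  -- subadditivity: H(USXY, L) ≤ H(USXY) + H(L)
  have F2 : ent (pf p fun ω => ((ω.2.2.1, ω.2.1, ω.2.2.2.2.1, ω.2.2.2.2.2), ω.1))
      ≤ ent (pf p fun ω => (ω.2.2.1, ω.2.1, ω.2.2.2.2.1, ω.2.2.2.2.2))
        + ent (pf p fun ω => ω.1) :=
    ent_pair_le hp _ _
  have R4 : ent (pf p fun ω => ((ω.2.2.1, ω.2.1, ω.2.2.2.2.1, ω.2.2.2.2.2), ω.1))
      = ent (pf p fun ω => (ω.2.2.1, ω.2.1, ω.2.2.2.2.1, ω.1, ω.2.2.2.2.2)) :=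
    ent_eq_ent _ _ (fun t => ((t.1, t.2.1, t.2.2.1, t.2.2.2.2), t.2.2.2.1))
      (fun q => (q.1.1, q.1.2.1, q.1.2.2.1, q.2, q.1.2.2.2)) (fun t => rfl) (fun ω => rfl)
  -- monotonicity: H(UVSXY) ≤ H(UVSXY, L)
  have F3 : ent (pf p fun ω => (ω.2.2.1, ω.2.2.2.1, ω.2.1, ω.2.2.2.2.1, ω.2.2.2.2.2))
      ≤ ent (pf p fun ω =>
          ((ω.2.2.1, ω.2.2.2.1, ω.2.1, ω.2.2.2.2.1, ω.2.2.2.2.2), ω.1)) :=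
    ent_le_pair hp _ _
  have R5 : ent (pf p fun ω =>
        ((ω.2.2.1, ω.2.2.2.1, ω.2.1, ω.2.2.2.2.1, ω.2.2.2.2.2), ω.1))
      = ent (pf p fun ω => (ω.2.2.1, ω.2.2.2.1, ω.2.1, ω.2.2.2.2.1, ω.1, ω.2.2.2.2.2)) :=
    ent_eq_ent _ _ (fun t => ((t.1, t.2.1, t.2.2.1, t.2.2.2.1, t.2.2.2.2.2), t.2.2.2.2.1))
      (fun q => (q.1.1, q.1.2.1, q.1.2.2.1, q.1.2.2.2.1, q.2, q.1.2.2.2.2))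
      (fun t => rfl) (fun ω => rfl)
  linarith [hMarkov, F1, F2, F3, M1, M2, M3, M4, R1, R2, R3, R4, R5]
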